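/- Let ħ > 0 be real, let q ∈ ℂ, n ∈ ℝ, k ∈ ℤ, and let z be a complex number such that z/ħ + k − n − 1/2 is not an integer. Define Ψ(z) := ħ^{z/ħ + k − n − 1/2} · Σ_{l=0}^{∞} ((q/ħ²)^l / l!) · Γ(z/ħ + k − n − 1/2 − l), where ħ^w := exp(w · log ħ) and the series converges absolutely. Then Ψ(z + ħ) + q · Ψ(z − ħ) − z · Ψ(z) + ħ·(n + 1/2 − k) · Ψ(z) = 0. -/

import Mathlib

open Filter

lemma qsc_arg_ne_zero (w : ℂ) (hw : ∀ m : ℤ, w ≠ m) (l : ℕ) : w - l ≠ 0 := by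
  intro h
  exact hw l (by push_cast; linear_combination h)

lemma qsc_summable (c w : ℂ) (hw : ∀ m : ℤ, w ≠ m) :
    Summable (fun l : ℕ => c ^ l / (l.factorial : ℂ) * Complex.Gamma (w - l)) := by
  set a : ℕ → ℂ := fun l => c ^ l / (l.factorial : ℂ) * Complex.Gamma (w - l) with ha
  have key : ∀ l : ℕ, a (l + 1) = c / ((l + 1) * (w - l - 1)) * a l := by
    intro l
    have hne : w - (l : ℂ) - 1 ≠ 0 := by
      intro h
      exact hw (l + 1) (by push_cast; linear_combination h)
    have hG : Complex.Gamma (w - l) = (w - l - 1) * Complex.Gamma (w - l - 1) := by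
      have h := Complex.Gamma_add_one _ hne
      rw [show w - (l : ℂ) - 1 + 1 = w - l by ring] at h
      exact h
    have hGarg : w - ((l : ℂ) + 1) = w - l - 1 := by ring
    simp only [ha, Nat.factorial_succ, pow_succ]
    push_cast
    rw [hGarg, hG]
    have h1 : ((l : ℂ) + 1) ≠ 0 := Nat.cast_add_one_ne_zero l
    have h2 : ((l.factorial : ℂ)) ≠ 0 := by
      exact_mod_cast Nat.cast_ne_zero.mpr l.factorial_ne_zero
    field_simp
  apply summable_of_ratio_norm_eventually_le (r := 1/2) (by norm_num)
  obtain ⟨N, hN⟩ := exists_nat_ge (2 * ‖c‖ + ‖w‖)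
  filter_upwards [eventually_ge_atTop N] with l hl
  have hlR : 2 * ‖c‖ + ‖w‖ ≤ (l : ℝ) := hN.trans (by exact_mod_cast hl)
  have hcnn : (0:ℝ) ≤ ‖c‖ := norm_nonneg _
  have hbound : (l : ℝ) + 1 - ‖w‖ ≤ ‖w - l - 1‖ := by
    calc (l : ℝ) + 1 - ‖w‖ = ‖((l : ℂ) + 1)‖ - ‖w‖ := by
          rw [show ((l : ℂ) + 1) = ((l + 1 : ℕ) : ℂ) by push_cast; ring]
          rw [Complex.norm_natCast]; push_cast; ring
      _ ≤ ‖((l : ℂ) + 1) - w‖ := norm_sub_norm_le _ _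
      _ = ‖w - l - 1‖ := by rw [← norm_neg]; ring_nf
  have hpos : (0:ℝ) < ‖w - l - 1‖ := by linarith
  have hl1 : (0:ℝ) < (l : ℝ) + 1 := by positivity
  rw [key l]
  rw [norm_mul, norm_div, norm_mul]
  have hratio : ‖c‖ / (‖((l:ℂ) + 1)‖ * ‖w - l - 1‖) ≤ 1/2 := by
    rw [show ‖((l:ℂ) + 1)‖ = (l:ℝ) + 1 by
      rw [show ((l : ℂ) + 1) = ((l + 1 : ℕ) : ℂ) by push_cast; ring, Complex.norm_natCast]
      push_cast; ring]
    rw [div_le_iff₀ (by positivity)]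
    nlinarith [mul_le_mul_of_nonneg_left hbound (le_of_lt hl1)]
  calc ‖c‖ / (‖((l:ℂ) + 1)‖ * ‖w - l - 1‖) * ‖a l‖ ≤ 1/2 * ‖a l‖ :=
    mul_le_mul_of_nonneg_right hratio (norm_nonneg _)

lemma qsc_key (c w : ℂ) (hw : ∀ m : ℤ, w ≠ m) :
    (∑' l : ℕ, c ^ l / (l.factorial : ℂ) * Complex.Gamma (w + 1 - l))
      + c * (∑' l : ℕ, c ^ l / (l.factorial : ℂ) * Complex.Gamma (w - 1 - l))
      - w * (∑' l : ℕ, c ^ l / (l.factorial : ℂ) * Complex.Gamma (w - l)) = 0 := by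
  have hwp : ∀ m : ℤ, w + 1 ≠ m := fun m h => hw (m - 1) (by push_cast; linear_combination h)
  have hwm : ∀ m : ℤ, w - 1 ≠ m := fun m h => hw (m + 1) (by push_cast; linear_combination h)
  set A : ℕ → ℂ := fun l => c ^ l / (l.factorial : ℂ) * Complex.Gamma (w + 1 - l) with hA
  set B : ℕ → ℂ := fun l => c ^ l / (l.factorial : ℂ) * Complex.Gamma (w - 1 - l) with hB
  set C : ℕ → ℂ := fun l => c ^ l / (l.factorial : ℂ) * Complex.Gamma (w - l) with hC
  have hSA : Summable A := by
    have := qsc_summable c (w + 1) hwp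
    exact this.congr fun l => by simp [hA]
  have hSB : Summable B := by
    have := qsc_summable c (w - 1) hwm
    exact this.congr fun l => by simp [hB]
  have hSC : Summable C := qsc_summable c w hw
  have hAC : ∀ l : ℕ, A l = (w - l) * C l := by
    intro l
    have hne : w - (l : ℂ) ≠ 0 := qsc_arg_ne_zero w hw l
    simp only [hA, hC]
    rw [show w + 1 - (l : ℂ) = (w - l) + 1 by ring, Complex.Gamma_add_one _ hne]
    ring
  set D : ℕ → ℂ := fun l => (l : ℂ) * C l with hD
  have hSD : Summable D := by
    refine ((hSC.mul_left w).sub hSA).congr fun l => ?_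
    rw [hAC l]; simp only [hD]; ring
  have h1 : ∑' l, A l = w * (∑' l, C l) - ∑' l, D l := by
    rw [← tsum_mul_left, ← Summable.tsum_sub (hSC.mul_left w) hSD]
    exact tsum_congr fun l => by rw [hAC l]; simp only [hD]; ring
  have h2 : ∑' l, D l = c * ∑' l, B l := by
    rw [Summable.tsum_eq_zero_add hSD, ← tsum_mul_left]
    have hD0 : D 0 = 0 := by simp [hD]
    rw [hD0, zero_add]
    refine tsum_congr fun m => ?_
    simp only [hD, hC, hB, Nat.factorial_succ, pow_succ]
    push_cast
    rw [show w - ((m : ℂ) + 1) = w - 1 - m by ring]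
    have h1' : ((m : ℂ) + 1) ≠ 0 := Nat.cast_add_one_ne_zero m
    have h2' : ((m.factorial : ℂ)) ≠ 0 := by
      exact_mod_cast Nat.cast_ne_zero.mpr m.factorial_ne_zero
    field_simp
  rw [h1, h2]
  ring

/-- Quantum spectral curve for the modified wave function
`Ψ(z) = hbar^{z/hbar+k−n−1/2} Σ_{l≥0} ((q/hbar²)^l/l!) Γ(z/hbar+k−n−1/2−l)`:
`Ψ(z+hbar) + q·Ψ(z−hbar) − z·Ψ(z) + hbar(n+1/2−k)·Ψ(z) = 0`. -/
theorem stmt4 (hbar : ℝ) (hhbar : 0 < hbar) (q : ℂ) (n : ℝ) (k : ℤ) (z : ℂ)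
    (hz : ∀ m : ℤ, z / (hbar : ℂ) + (k : ℂ) - (n : ℂ) - 1/2 ≠ (m : ℂ))
    (Ψ : ℂ → ℂ)
    (hΨ : ∀ u : ℂ, Ψ u =
      Complex.exp ((u / (hbar : ℂ) + (k : ℂ) - (n : ℂ) - 1/2) * (Real.log hbar : ℂ)) *
        ∑' l : ℕ, (q / (hbar : ℂ) ^ 2) ^ l / (l.factorial : ℂ) *
          Complex.Gamma (u / (hbar : ℂ) + (k : ℂ) - (n : ℂ) - 1/2 - (l : ℂ))) :
    Ψ (z + (hbar : ℂ)) + q * Ψ (z - (hbar : ℂ)) - z * Ψ z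
      + (hbar : ℂ) * ((n : ℂ) + 1/2 - (k : ℂ)) * Ψ z = 0 := by
  have hb0 : (hbar : ℂ) ≠ 0 := by
    exact_mod_cast Complex.ofReal_ne_zero.mpr hhbar.ne'
  set w : ℂ := z / (hbar : ℂ) + (k : ℂ) - (n : ℂ) - 1/2 with hwdef
  set L : ℂ := (Real.log hbar : ℂ) with hL
  set c : ℂ := q / (hbar : ℂ) ^ 2 with hc
  have hp : (z + (hbar : ℂ)) / (hbar : ℂ) + (k : ℂ) - (n : ℂ) - 1/2 = w + 1 := by
    rw [hwdef]; field_simp; ring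
  have hm : (z - (hbar : ℂ)) / (hbar : ℂ) + (k : ℂ) - (n : ℂ) - 1/2 = w - 1 := by
    rw [hwdef]; field_simp; ring
  rw [hΨ, hΨ, hΨ, hp, hm]
  have hexpL : Complex.exp L = (hbar : ℂ) := by
    rw [hL, ← Complex.ofReal_exp, Real.exp_log hhbar]
  have hEw : Complex.exp (w * L) = Complex.exp ((w - 1) * L) * (hbar : ℂ) := by
    rw [show w * L = (w - 1) * L + L by ring, Complex.exp_add, hexpL]
  have hEp : Complex.exp ((w + 1) * L) = Complex.exp ((w - 1) * L) * (hbar : ℂ) ^ 2 := by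
    rw [show (w + 1) * L = (w - 1) * L + (L + L) by ring, Complex.exp_add, Complex.exp_add,
      hexpL]
    ring
  rw [hEw, hEp]
  have key := qsc_key c w hz
  have hzw : (hbar : ℂ) * w = z + (hbar : ℂ) * ((k : ℂ) - n - 1/2) := by
    rw [hwdef]; field_simp; ring
  have hcq : (hbar : ℂ) ^ 2 * c = q := by rw [hc]; field_simp
  set E := Complex.exp ((w - 1) * L) with hE
  set Sp := ∑' l : ℕ, c ^ l / (l.factorial : ℂ) * Complex.Gamma (w + 1 - l) with hSp
  set Sm := ∑' l : ℕ, c ^ l / (l.factorial : ℂ) * Complex.Gamma (w - 1 - l) with hSm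
  set S := ∑' l : ℕ, c ^ l / (l.factorial : ℂ) * Complex.Gamma (w - l) with hS
  clear_value w L c E Sp Sm S
  linear_combination (E * (hbar : ℂ) ^ 2) * key - (E * Sm) * hcq + (E * S * (hbar:ℂ)) * hzw
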